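/- Pfaff transformation identity for the coverage function: for every real α > 2 and every x ≥ 0, h_α(x) = (1 + x)^(2/α) · Σ_{n=0}^∞ [((−δ)_n)²/((1−δ)_n n!)] · (x/(1+x))^n, where δ = 2/α; equivalently P_α(x) = c₀(x)·(1+x)^(−2/α) with c₀(x) := [₂F₁(−δ, −δ; 1−δ; x/(1+x))]^(−1), and the series converges for all x ≥ 0. -/

import Mathlib

open MeasureTheory Filter Real Set Topology

/-- The closed-form downlink SIR coverage denominator:
`h α x = 1 + ∫_1^∞ x / (x + w^(α/2)) dw`. -/
noncomputable def hcov (α x : ℝ) : ℝ := 1 + ∫ w in Set.Ioi (1 : ℝ), x / (x + w ^ (α / 2))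

/-- The SIR coverage function `P_α(x) = h_α(x)⁻¹`. -/
noncomputable def Pcov (α x : ℝ) : ℝ := (hcov α x)⁻¹


noncomputable def pb (c : ℝ) (m : ℕ) : ℝ := (ascPochhammer ℝ m).eval c / m.factorial

lemma pb_zero (c : ℝ) : pb c 0 = 1 := by simp [pb]

lemma pb_succ (c : ℝ) (m : ℕ) : pb c (m + 1) = pb c m * (c + m) / (m + 1) := by
  have hm : (m.factorial : ℝ) ≠ 0 := by exact_mod_cast Nat.factorial_ne_zero m
  have hm1 : ((m : ℝ) + 1) ≠ 0 := by positivity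
  rw [pb, pb, ascPochhammer_succ_eval, Nat.factorial_succ]
  push_cast
  rw [div_mul_eq_mul_div, div_div]
  ring_nf

lemma pb_pos {c : ℝ} (hc : 0 < c) (m : ℕ) : 0 < pb c m := by
  apply div_pos (ascPochhammer_pos m c hc)
  exact_mod_cast Nat.factorial_pos m

lemma pb_le_one {c : ℝ} (hc0 : 0 < c) (hc1 : c ≤ 1) (m : ℕ) : pb c m ≤ 1 := by
  induction m with
  | zero => simp [pb_zero]
  | succ n ih =>
    rw [pb_succ]
    rw [div_le_one (by positivity)]
    calc pb c n * (c + n) ≤ 1 * (c + n) := by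
          apply mul_le_mul_of_nonneg_right ih (by positivity)
      _ ≤ n + 1 := by linarith

section aux
variable {c u : ℝ}

lemma intInt_aux (hu0 : 0 ≤ u) (hu1 : u < 1) (K : ℕ) :
    IntervalIntegrable (fun t : ℝ => t ^ K * (1 - t) ^ (c - 1)) volume 0 u := by
  apply ContinuousOn.intervalIntegrable
  apply ContinuousOn.mul (by fun_prop)
  apply ContinuousOn.rpow_const (by fun_prop)
  intro t ht
  rw [Set.uIcc_of_le hu0] at ht
  left
  have : t ≤ u := ht.2
  intro h
  have : (1:ℝ) - t > 0 := by linarith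
  linarith [h ▸ this]

lemma ftc_step (hu0 : 0 ≤ u) (hu1 : u < 1) (N : ℕ) :
    ((N : ℝ) + 1) * (∫ t in (0:ℝ)..u, t ^ N * (1 - t) ^ (c - 1)) -
      (c + N + 1) * (∫ t in (0:ℝ)..u, t ^ (N + 1) * (1 - t) ^ (c - 1))
      = u ^ (N + 1) * (1 - u) ^ c := by
  have hder : ∀ t ∈ Set.uIcc (0:ℝ) u,
      HasDerivAt (fun s : ℝ => s ^ (N + 1) * (1 - s) ^ c)
        (((N : ℝ) + 1) * (t ^ N * (1 - t) ^ (c - 1)) -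
          (c + N + 1) * (t ^ (N + 1) * (1 - t) ^ (c - 1))) t := by
    intro t ht
    rw [Set.uIcc_of_le hu0] at ht
    have ht1 : 0 < 1 - t := by have := ht.2; linarith
    have h1 : HasDerivAt (fun s : ℝ => s ^ (N + 1)) (((N:ℝ) + 1) * t ^ N) t := by
      simpa using hasDerivAt_pow (N + 1) t
    have h2 : HasDerivAt (fun s : ℝ => (1 - s) ^ c) (c * (1 - t) ^ (c - 1) * (-1)) t := by
      have hg : HasDerivAt (fun y : ℝ => y ^ c) (c * (1 - t) ^ (c - 1)) (1 - t) :=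
        Real.hasDerivAt_rpow_const (Or.inl (ne_of_gt ht1))
      have hf : HasDerivAt (fun s : ℝ => 1 - s) (-1) t := by
        simpa using (hasDerivAt_id t).const_sub 1
      simpa [Function.comp_def] using hg.comp t hf
    have := h1.mul h2
    refine this.congr_deriv ?_
    have hc1 : (1 - t) ^ c = (1 - t) * (1 - t) ^ (c - 1) := by
      have h := Real.rpow_add ht1 1 (c - 1)
      rw [Real.rpow_one] at h
      simpa [show 1 + (c - 1) = c by ring] using h
    rw [hc1]
    ring
  have hint : IntervalIntegrable
      (fun t : ℝ => ((N : ℝ) + 1) * (t ^ N * (1 - t) ^ (c - 1)) -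
        (c + N + 1) * (t ^ (N + 1) * (1 - t) ^ (c - 1))) volume 0 u :=
    ((intInt_aux hu0 hu1 N).const_mul _).sub ((intInt_aux hu0 hu1 (N+1)).const_mul _)
  have h := intervalIntegral.integral_eq_sub_of_hasDerivAt hder hint
  rw [intervalIntegral.integral_sub ((intInt_aux hu0 hu1 N).const_mul _)
      ((intInt_aux hu0 hu1 (N+1)).const_mul _),
    intervalIntegral.integral_const_mul, intervalIntegral.integral_const_mul] at h
  rw [h]
  simp

end aux

section key
variable {c u : ℝ}

lemma ftc_base (hu0 : 0 ≤ u) (hu1 : u < 1) :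
    c * (∫ t in (0:ℝ)..u, t ^ 0 * (1 - t) ^ (c - 1)) = 1 - (1 - u) ^ c := by
  have hder : ∀ t ∈ Set.uIcc (0:ℝ) u,
      HasDerivAt (fun s : ℝ => -((1 - s) ^ c)) (c * (t ^ 0 * (1 - t) ^ (c - 1))) t := by
    intro t ht
    rw [Set.uIcc_of_le hu0] at ht
    have ht1 : 0 < 1 - t := by have := ht.2; linarith
    have hg : HasDerivAt (fun y : ℝ => y ^ c) (c * (1 - t) ^ (c - 1)) (1 - t) :=
      Real.hasDerivAt_rpow_const (Or.inl (ne_of_gt ht1))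
    have hf : HasDerivAt (fun s : ℝ => 1 - s) (-1) t := by
      simpa using (hasDerivAt_id t).const_sub 1
    have := (hg.comp t hf).neg
    refine this.congr_deriv ?_
    ring
  have hint : IntervalIntegrable (fun t : ℝ => c * (t ^ 0 * (1 - t) ^ (c - 1))) volume 0 u :=
    (intInt_aux hu0 hu1 0).const_mul _
  have h := intervalIntegral.integral_eq_sub_of_hasDerivAt hder hint
  rw [intervalIntegral.integral_const_mul] at h
  rw [h]
  simp [Real.one_rpow]
  ring

lemma pb_key (hc0 : 0 < c) (hu0 : 0 ≤ u) (hu1 : u < 1) (N : ℕ) :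
    (1 - u) ^ c * (∑ m ∈ Finset.range (N + 1), pb c m * u ^ m)
      = 1 - ((N : ℝ) + 1) * pb c (N + 1) *
          ∫ t in (0:ℝ)..u, t ^ N * (1 - t) ^ (c - 1) := by
  induction N with
  | zero =>
    have hb := ftc_base (c := c) hu0 hu1
    have h1 : pb c 1 = c := by rw [pb_succ, pb_zero]; norm_num
    rw [Finset.sum_range_one, pb_zero, pow_zero, mul_one]
    simp only [pow_zero, one_mul] at hb
    norm_num [h1]
    linarith
  | succ N ih =>
    have hftc := ftc_step (c := c) hu0 hu1 N
    have hps : ((N : ℝ) + 2) * pb c (N + 2) = pb c (N + 1) * (c + (N + 1)) := by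
      rw [pb_succ c (N + 1)]
      have : ((N : ℝ) + 1 + 1) ≠ 0 := by positivity
      push_cast
      field_simp
      ring
    rw [Finset.sum_range_succ, mul_add]
    rw [ih]
    push_cast
    push_cast at hps
    linear_combination (∫ t in (0:ℝ)..u, t ^ (N + 1) * (1 - t) ^ (c - 1)) * hps -
      pb c (N + 1) * hftc

theorem pb_hasSum (hc0 : 0 < c) (hc1 : c ≤ 1) (hu0 : 0 ≤ u) (hu1 : u < 1) :
    HasSum (fun m : ℕ => pb c m * u ^ m) ((1 - u) ^ (-c)) := by
  have h1u : 0 < 1 - u := by linarith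
  have hpow : 0 < (1 - u) ^ c := Real.rpow_pos_of_pos h1u c
  have hInn : ∀ N : ℕ, 0 ≤ ∫ t in (0:ℝ)..u, t ^ N * (1 - t) ^ (c - 1) := fun N =>
    intervalIntegral.integral_nonneg hu0 (fun t ht => by
      have h0 := ht.1
      have h1 : 0 < 1 - t := by have := ht.2; linarith
      positivity)
  have hIle : ∀ N : ℕ, (∫ t in (0:ℝ)..u, t ^ N * (1 - t) ^ (c - 1))
      ≤ (1 - u) ^ (c - 1) * (u ^ (N + 1) / (N + 1)) := by
    intro N
    have hmono : ∀ t ∈ Set.Icc (0:ℝ) u, t ^ N * (1 - t) ^ (c - 1)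
        ≤ (1 - u) ^ (c - 1) * t ^ N := by
      intro t ht
      obtain ⟨ht0, htu⟩ := ht
      have ht1 : 0 < 1 - t := by linarith
      have hle : (1 - t) ^ (c - 1) ≤ (1 - u) ^ (c - 1) :=
        Real.rpow_le_rpow_of_nonpos h1u (by linarith) (by linarith)
      calc t ^ N * (1 - t) ^ (c - 1) ≤ t ^ N * (1 - u) ^ (c - 1) :=
            mul_le_mul_of_nonneg_left hle (pow_nonneg ht0 N)
        _ = (1 - u) ^ (c - 1) * t ^ N := by ring
    calc (∫ t in (0:ℝ)..u, t ^ N * (1 - t) ^ (c - 1))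
        ≤ ∫ t in (0:ℝ)..u, (1 - u) ^ (c - 1) * t ^ N :=
          intervalIntegral.integral_mono_on hu0 (intInt_aux hu0 hu1 N)
            ((intervalIntegral.intervalIntegrable_pow N).const_mul _) hmono
      _ = (1 - u) ^ (c - 1) * (u ^ (N + 1) / (N + 1)) := by
          rw [intervalIntegral.integral_const_mul, integral_pow]
          norm_num
  have hnn : ∀ m : ℕ, 0 ≤ pb c m * u ^ m := fun m => by
    have := pb_pos hc0 (c := c) m
    positivity
  have hSle : ∀ N : ℕ, ∑ m ∈ Finset.range N, pb c m * u ^ m ≤ ((1 - u) ^ c)⁻¹ := by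
    intro N
    cases N with
    | zero =>
      simp only [Finset.range_zero, Finset.sum_empty]
      positivity
    | succ K =>
      have hk := pb_key hc0 hu0 hu1 K
      have h2 : (1 - u) ^ c * (∑ m ∈ Finset.range (K + 1), pb c m * u ^ m) ≤ 1 := by
        rw [hk]
        have hp := pb_pos hc0 (c := c) (K + 1)
        have hI := hInn K
        nlinarith [mul_nonneg (mul_nonneg (by positivity : (0:ℝ) ≤ (K:ℝ) + 1) hp.le) hI]
      calc ∑ m ∈ Finset.range (K + 1), pb c m * u ^ m
          = ((1 - u) ^ c)⁻¹ * ((1 - u) ^ c * ∑ m ∈ Finset.range (K + 1), pb c m * u ^ m) := by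
            field_simp
        _ ≤ ((1 - u) ^ c)⁻¹ * 1 := mul_le_mul_of_nonneg_left h2 (by positivity)
        _ = ((1 - u) ^ c)⁻¹ := mul_one _
  have hsum : Summable (fun m : ℕ => pb c m * u ^ m) := summable_of_sum_range_le hnn hSle
  set S := ∑' m : ℕ, pb c m * u ^ m with hSdef
  have hT1 : Tendsto (fun N : ℕ => (1 - u) ^ c * ∑ m ∈ Finset.range (N + 1), pb c m * u ^ m)
      atTop (𝓝 ((1 - u) ^ c * S)) :=
    (hsum.hasSum.tendsto_sum_nat.comp (tendsto_add_atTop_nat 1)).const_mul _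
  have hR0 : Tendsto (fun N : ℕ => ((N : ℝ) + 1) * pb c (N + 1) *
      ∫ t in (0:ℝ)..u, t ^ N * (1 - t) ^ (c - 1)) atTop (𝓝 0) := by
    have hg : Tendsto (fun N : ℕ => (1 - u) ^ (c - 1) * u ^ (N + 1)) atTop (𝓝 0) := by
      have hu' : Tendsto (fun N : ℕ => u ^ (N + 1)) atTop (𝓝 0) :=
        (tendsto_pow_atTop_nhds_zero_of_lt_one hu0 hu1).comp (tendsto_add_atTop_nat 1)
      simpa using hu'.const_mul ((1 - u) ^ (c - 1))
    apply squeeze_zero (fun N => ?_) (fun N => ?_) hg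
    · have hp := pb_pos hc0 (c := c) (N + 1)
      have hI := hInn N
      positivity
    · have hp := pb_pos hc0 (c := c) (N + 1)
      have hN1 : (0:ℝ) < (N : ℝ) + 1 := by positivity
      calc ((N : ℝ) + 1) * pb c (N + 1) * ∫ t in (0:ℝ)..u, t ^ N * (1 - t) ^ (c - 1)
          ≤ ((N : ℝ) + 1) * pb c (N + 1) * ((1 - u) ^ (c - 1) * (u ^ (N + 1) / ((N:ℝ) + 1))) :=
            mul_le_mul_of_nonneg_left (hIle N) (by positivity)
        _ = pb c (N + 1) * ((1 - u) ^ (c - 1) * u ^ (N + 1)) := by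
            field_simp
        _ ≤ 1 * ((1 - u) ^ (c - 1) * u ^ (N + 1)) := by
            apply mul_le_mul_of_nonneg_right (pb_le_one hc0 hc1 _) (by positivity)
        _ = (1 - u) ^ (c - 1) * u ^ (N + 1) := one_mul _
  have hT2 : Tendsto (fun N : ℕ => 1 - ((N : ℝ) + 1) * pb c (N + 1) *
      ∫ t in (0:ℝ)..u, t ^ N * (1 - t) ^ (c - 1)) atTop (𝓝 1) := by
    simpa using tendsto_const_nhds.sub hR0
  have heq : (fun N : ℕ => (1 - u) ^ c * ∑ m ∈ Finset.range (N + 1), pb c m * u ^ m)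
      = fun N : ℕ => 1 - ((N : ℝ) + 1) * pb c (N + 1) *
          ∫ t in (0:ℝ)..u, t ^ N * (1 - t) ^ (c - 1) :=
    funext fun N => pb_key hc0 hu0 hu1 N
  rw [heq] at hT1
  have hfin : (1 - u) ^ c * S = 1 := tendsto_nhds_unique hT1 hT2
  have hS : S = (1 - u) ^ (-c) := by
    rw [Real.rpow_neg h1u.le]
    exact eq_inv_of_mul_eq_one_left (by linarith [hfin] : S * (1 - u) ^ c = 1)
  exact hS ▸ hsum.hasSum

end key
section swap
variable {d z : ℝ}

lemma rpow_Ioo_int {r : ℝ} (hr : -1 < r) :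
    IntegrableOn (fun t : ℝ => t ^ r) (Set.Ioo (0:ℝ) 1) volume ∧
      (∫ t in Set.Ioo (0:ℝ) 1, t ^ r) = 1 / (r + 1) := by
  constructor
  · have h := intervalIntegral.intervalIntegrable_rpow' (a := 0) (b := 1) hr
    rw [intervalIntegrable_iff_integrableOn_Ioc_of_le zero_le_one] at h
    exact h.mono_set Set.Ioo_subset_Ioc_self
  · rw [← integral_Ioc_eq_integral_Ioo, ← intervalIntegral.integral_of_le zero_le_one,
      integral_rpow (Or.inl hr)]
    rw [Real.one_rpow, Real.zero_rpow (by linarith : r + 1 ≠ 0)]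
    norm_num

lemma K_swap (hd0 : 0 < d) (hd1 : d < 1) (hz0 : 0 ≤ z) (hz1 : z < 1) :
    Summable (fun m : ℕ => pb (1 - d) m * z ^ m / ((m : ℝ) + 1 - d)) ∧
    (∫ t in Set.Ioo (0:ℝ) 1, t ^ (-d) * (1 - t * z) ^ (d - 1))
      = ∑' m : ℕ, pb (1 - d) m * z ^ m / ((m : ℝ) + 1 - d) := by
  have hc0 : 0 < 1 - d := by linarith
  have hc1 : 1 - d ≤ 1 := by linarith
  set f : ℕ → ℝ → ℝ := fun m t => pb (1 - d) m * z ^ m * t ^ ((m : ℝ) - d) with hf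
  -- pointwise sum identity on Ioo 0 1
  have hptw : ∀ t ∈ Set.Ioo (0:ℝ) 1, HasSum (fun m => f m t)
      (t ^ (-d) * (1 - t * z) ^ (d - 1)) := by
    intro t ht
    obtain ⟨ht0, ht1⟩ := ht
    have htz0 : 0 ≤ t * z := mul_nonneg ht0.le hz0
    have htz1 : t * z < 1 := by
      calc t * z ≤ 1 * z := mul_le_mul_of_nonneg_right ht1.le hz0
        _ < 1 := by linarith
    have h := (pb_hasSum hc0 hc1 htz0 htz1).mul_left (t ^ (-d))
    have hexp : -(1 - d) = d - 1 := by ring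
    rw [hexp] at h
    have e : (fun m => f m t) = fun i => t ^ (-d) * (pb (1 - d) i * (t * z) ^ i) := by
      funext m
      show pb (1 - d) m * z ^ m * t ^ ((m : ℝ) - d) = _
      rw [show ((m:ℝ) - d) = (m:ℝ) + (-d) by ring, Real.rpow_add ht0, Real.rpow_natCast, mul_pow]
      ring
    rw [e]
    exact h
  -- integral of each term
  have hval : ∀ m : ℕ, (∫ t in Set.Ioo (0:ℝ) 1, f m t)
      = pb (1 - d) m * z ^ m / ((m : ℝ) + 1 - d) := by
    intro m
    have hr : (-1 : ℝ) < (m : ℝ) - d := by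
      have : (0:ℝ) ≤ m := Nat.cast_nonneg m
      linarith
    rw [hf]
    simp only []
    rw [MeasureTheory.integral_const_mul, (rpow_Ioo_int hr).2]
    rw [show (m : ℝ) - d + 1 = (m : ℝ) + 1 - d by ring]
    ring
  have hintm : ∀ m : ℕ, IntegrableOn (f m) (Set.Ioo (0:ℝ) 1) volume := by
    intro m
    have hr : (-1 : ℝ) < (m : ℝ) - d := by
      have : (0:ℝ) ≤ m := Nat.cast_nonneg m
      linarith
    exact ((rpow_Ioo_int hr).1.const_mul _)
  -- nonnegativity
  have hnn : ∀ m : ℕ, ∀ t ∈ Set.Ioo (0:ℝ) 1, 0 ≤ f m t := by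
    intro m t ht
    have := pb_pos hc0 m
    have := Real.rpow_nonneg ht.1.le ((m : ℝ) - d)
    positivity
  -- summability of the values
  have hcnn : ∀ m : ℕ, 0 ≤ pb (1 - d) m * z ^ m / ((m : ℝ) + 1 - d) := by
    intro m
    have h1 := pb_pos hc0 m
    have h2 : (0:ℝ) < (m : ℝ) + 1 - d := by
      have : (0:ℝ) ≤ m := Nat.cast_nonneg m
      linarith
    positivity
  have hcsum : Summable (fun m : ℕ => pb (1 - d) m * z ^ m / ((m : ℝ) + 1 - d)) := by
    refine Summable.of_nonneg_of_le hcnn (fun m => ?_)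
      ((summable_geometric_of_lt_one hz0 hz1).mul_left (1 / (1 - d)))
    · 
      have h1 := pb_pos hc0 m
      have h2 : (0:ℝ) < (m : ℝ) + 1 - d := by
        have : (0:ℝ) ≤ m := Nat.cast_nonneg m
        linarith
      have h3 : (1 : ℝ) - d ≤ (m : ℝ) + 1 - d := by
        have : (0:ℝ) ≤ m := Nat.cast_nonneg m
        linarith
      calc pb (1 - d) m * z ^ m / ((m : ℝ) + 1 - d)
          ≤ 1 * z ^ m / (1 - d) :=
            div_le_div₀ (by positivity)
              (mul_le_mul_of_nonneg_right (pb_le_one hc0 hc1 m) (by positivity)) hc0 h3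
        _ = 1 / (1 - d) * z ^ m := by ring
  refine ⟨hcsum, ?_⟩
  -- measurability
  have hmeas : ∀ m : ℕ, AEStronglyMeasurable (f m) (volume.restrict (Set.Ioo (0:ℝ) 1)) := by
    intro m
    apply ContinuousOn.aestronglyMeasurable _ measurableSet_Ioo
    apply ContinuousOn.mul continuousOn_const
    exact ContinuousOn.rpow_const continuousOn_id (fun t ht => Or.inl (ne_of_gt ht.1))
  -- lintegral finiteness
  have hlin : ∀ m : ℕ, (∫⁻ t, ‖f m t‖₊ ∂(volume.restrict (Set.Ioo (0:ℝ) 1)))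
      = ENNReal.ofReal (pb (1 - d) m * z ^ m / ((m : ℝ) + 1 - d)) := by
    intro m
    have hae : 0 ≤ᵐ[volume.restrict (Set.Ioo (0:ℝ) 1)] f m :=
      (ae_restrict_iff' measurableSet_Ioo).2 (Filter.Eventually.of_forall (hnn m))
    rw [← hval m, MeasureTheory.ofReal_integral_eq_lintegral_ofReal (hintm m) hae]
    apply lintegral_congr_ae
    refine hae.mono fun t ht => ?_
    rw [Pi.zero_apply] at ht
    exact Real.enorm_eq_ofReal ht
  have hfin : (∑' m : ℕ, ∫⁻ t, ‖f m t‖₊ ∂(volume.restrict (Set.Ioo (0:ℝ) 1))) ≠ ⊤ := by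
    rw [tsum_congr hlin, ← ENNReal.ofReal_tsum_of_nonneg hcnn hcsum]
    exact ENNReal.ofReal_ne_top
  have hswap := MeasureTheory.integral_tsum hmeas hfin
  rw [tsum_congr hval] at hswap
  rw [← hswap]
  apply setIntegral_congr_fun measurableSet_Ioo
  intro t ht
  exact ((hptw t ht).tsum_eq).symm

end swap

lemma J_subst {α x : ℝ} (hα : 2 < α) (hx : 0 ≤ x) :
    (∫ w in Set.Ioi (1:ℝ), x / (x + w ^ (α / 2)))
      = ∫ t in Set.Ioo (0:ℝ) 1, (2 / α) * x * t ^ (-(2 / α)) / (1 + x * t) := by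
  have hα0 : (0:ℝ) < α := by linarith
  set d : ℝ := 2 / α with hd
  have hd0 : 0 < d := by positivity
  have hd1 : d < 1 := by rw [hd, div_lt_one hα0]; linarith
  have himg : Set.Ioi (1:ℝ) = (fun t : ℝ => t ^ (-d)) '' (Set.Ioo 0 1) := by
    ext w
    constructor
    · intro hw
      have hw1 : (1:ℝ) < w := hw
      have hw0 : (0:ℝ) < w := by linarith
      refine ⟨w ^ (-(1/d)), ⟨Real.rpow_pos_of_pos hw0 _, ?_⟩, ?_⟩
      · exact Real.rpow_lt_one_of_one_lt_of_neg hw1 (neg_lt_zero.mpr (by positivity))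
      · show (w ^ (-(1/d))) ^ (-d) = w
        rw [← Real.rpow_mul hw0.le]
        rw [show (-(1/d)) * (-d) = 1 by field_simp]
        exact Real.rpow_one w
    · rintro ⟨t, ⟨ht0, ht1⟩, rfl⟩
      show (1:ℝ) < t ^ (-d)
      rw [Real.one_lt_rpow_iff_of_pos ht0]
      right
      exact ⟨ht1, by linarith⟩
  have hderiv : ∀ t ∈ Set.Ioo (0:ℝ) 1, HasDerivWithinAt (fun t : ℝ => t ^ (-d))
      ((-d) * t ^ (-d - 1)) (Set.Ioo 0 1) t := fun t ht =>
    (Real.hasDerivAt_rpow_const (Or.inl (ne_of_gt ht.1))).hasDerivWithinAt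
  have hinj : Set.InjOn (fun t : ℝ => t ^ (-d)) (Set.Ioo 0 1) := by
    have hanti : StrictAntiOn (fun t : ℝ => t ^ (-d)) (Set.Ioo 0 1) := by
      intro a ha b hb hab
      simp only
      rw [Real.rpow_neg ha.1.le, Real.rpow_neg hb.1.le]
      exact inv_strictAnti₀ (Real.rpow_pos_of_pos ha.1 d)
        (Real.rpow_lt_rpow ha.1.le hab hd0)
    exact hanti.injOn
  rw [himg, integral_image_eq_integral_abs_deriv_smul measurableSet_Ioo hderiv hinj]
  apply setIntegral_congr_fun measurableSet_Ioo
  intro t ht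
  obtain ⟨ht0, ht1⟩ := ht
  have htpow : (0:ℝ) < t ^ (-d - 1) := Real.rpow_pos_of_pos ht0 _
  have h1 : (t ^ (-d)) ^ (α / 2) = t⁻¹ := by
    rw [← Real.rpow_mul ht0.le]
    rw [show (-d) * (α / 2) = -1 by rw [hd]; field_simp]
    exact Real.rpow_neg_one t
  have h2 : t ^ (-d - 1) = t ^ (-d) * t⁻¹ := by
    rw [show (-d - 1 : ℝ) = -d + (-1) by ring, Real.rpow_add ht0, Real.rpow_neg_one]
  show |(-d) * t ^ (-d - 1)| * (x / (x + (t ^ (-d)) ^ (α / 2))) = d * x * t ^ (-d) / (1 + x * t)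
  rw [h1, abs_mul, abs_neg, abs_of_pos hd0, abs_of_pos htpow, h2]
  have hden : 0 < x + t⁻¹ := by positivity
  have hden2 : 0 < 1 + x * t := by positivity
  field_simp
  ring

lemma moebius_subst {d z : ℝ} (hd0 : 0 < d) (hd1 : d < 1) (hz0 : 0 ≤ z) (hz1 : z < 1) :
    (∫ t in Set.Ioo (0:ℝ) 1, t ^ (-d) * (1 - t * z) ^ (d - 1))
      = (1 - z) ^ d * ∫ s in Set.Ioo (0:ℝ) 1, s ^ (-d) / (1 - z + z * s) := by
  have h1z : (0:ℝ) < 1 - z := by linarith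
  set φ : ℝ → ℝ := fun s => s / (1 - z + z * s) with hφ
  have hA : ∀ s : ℝ, 0 ≤ s → 0 < 1 - z + z * s := fun s hs => by
    have : 0 ≤ z * s := mul_nonneg hz0 hs
    linarith
  have himg : Set.Ioo (0:ℝ) 1 = φ '' (Set.Ioo 0 1) := by
    ext t
    constructor
    · rintro ⟨ht0, ht1⟩
      have htz : t * z < 1 := by
        calc t * z ≤ 1 * z := mul_le_mul_of_nonneg_right ht1.le hz0
          _ < 1 := by linarith
      have h1tz : (0:ℝ) < 1 - t * z := by linarith
      refine ⟨t * (1 - z) / (1 - t * z), ⟨by positivity, ?_⟩, ?_⟩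
      · rw [div_lt_one h1tz]
        nlinarith
      · show t * (1 - z) / (1 - t * z) / (1 - z + z * (t * (1 - z) / (1 - t * z))) = t
        have hn1 : (1 - t * z) ≠ 0 := ne_of_gt h1tz
        have hn2 : (1 - z) ≠ 0 := ne_of_gt h1z
        have hden : 1 - z + z * (t * (1 - z) / (1 - t * z)) = (1 - z) / (1 - t * z) := by
          have hn1' : 1 - z * t ≠ 0 := by rwa [mul_comm]
          field_simp
          ring
        rw [hden]
        field_simp
    · rintro ⟨s, ⟨hs0, hs1⟩, rfl⟩
      have hAs := hA s hs0.le
      constructor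
      · exact div_pos hs0 hAs
      · rw [div_lt_one hAs]
        nlinarith
  have hderiv : ∀ s ∈ Set.Ioo (0:ℝ) 1, HasDerivWithinAt φ
      ((1 - z) / (1 - z + z * s) ^ 2) (Set.Ioo 0 1) s := by
    intro s hs
    have hAs := hA s hs.1.le
    have h1 : HasDerivAt (fun s : ℝ => s) 1 s := hasDerivAt_id s
    have h2 : HasDerivAt (fun s : ℝ => 1 - z + z * s) z s := by
      simpa using ((hasDerivAt_id s).const_mul z).const_add (1 - z)
    have := h1.div h2 (ne_of_gt hAs)
    have heq : (1 * (1 - z + z * s) - s * z) / (1 - z + z * s) ^ 2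
        = (1 - z) / (1 - z + z * s) ^ 2 := by ring_nf
    rw [heq] at this
    exact this.hasDerivWithinAt
  have hinj : Set.InjOn φ (Set.Ioo 0 1) := by
    intro a ha b hb hab
    have hAa := hA a ha.1.le
    have hAb := hA b hb.1.le
    rw [hφ] at hab
    simp only at hab
    rw [div_eq_div_iff (ne_of_gt hAa) (ne_of_gt hAb)] at hab
    nlinarith [hab]
  have key := integral_image_eq_integral_abs_deriv_smul measurableSet_Ioo hderiv hinj
    (fun t => t ^ (-d) * (1 - t * z) ^ (d - 1))
  rw [← himg] at key
  rw [key, ← MeasureTheory.integral_const_mul]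
  apply setIntegral_congr_fun measurableSet_Ioo
  intro s hs
  obtain ⟨hs0, hs1⟩ := hs
  have hAs := hA s hs0.le
  set A : ℝ := 1 - z + z * s with hAdef
  have hquot : 1 - φ s * z = (1 - z) / A := by
    rw [hφ]
    field_simp
    ring
  show |(1 - z) / A ^ 2| * (φ s ^ (-d) * (1 - φ s * z) ^ (d - 1))
      = (1 - z) ^ d * (s ^ (-d) / A)
  rw [hquot, abs_of_pos (by positivity)]
  rw [show φ s = s / A from rfl, Real.div_rpow hs0.le hAs.le, Real.div_rpow h1z.le hAs.le]
  have ea : A ^ (-d) = (A ^ d)⁻¹ := Real.rpow_neg hAs.le d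
  have eb : A ^ (d - 1) = A ^ d / A := by
    rw [Real.rpow_sub hAs, Real.rpow_one]
  have ec : (1 - z) ^ (d - 1) = (1 - z) ^ d / (1 - z) := by
    rw [Real.rpow_sub h1z, Real.rpow_one]
  rw [ea, eb, ec]
  have hX : A ^ d ≠ 0 := ne_of_gt (Real.rpow_pos_of_pos hAs d)
  have hAne : A ≠ 0 := ne_of_gt hAs
  have h1zne : (1 - z) ≠ 0 := ne_of_gt h1z
  field_simp

set_option maxHeartbeats 1000000 in
/-- Pfaff transformation identity for the coverage function: for `α > 2`, `x ≥ 0`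
and `δ = 2/α`, the series `Σ_{n=0}^∞ ((-δ)_n)²/((1-δ)_n n!) (x/(1+x))^n` (which is
`₂F₁(-δ, -δ; 1-δ; x/(1+x))`) converges, and
`h_α(x) = (1+x)^(2/α) · Σ_{n=0}^∞ ((-δ)_n)²/((1-δ)_n n!) (x/(1+x))^n`;
equivalently `P_α(x) = c₀(x)·(1+x)^(-2/α)` with `c₀(x)` the reciprocal of that sum. -/
theorem sir_coverage_pfaff (α : ℝ) (hα : 2 < α) (x : ℝ) (hx : 0 ≤ x) :
    Summable (fun n : ℕ => ((ascPochhammer ℝ n).eval (-(2 / α))) ^ 2 /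
        ((ascPochhammer ℝ n).eval (1 - 2 / α) * (n.factorial : ℝ)) * (x / (1 + x)) ^ n) ∧
    hcov α x = (1 + x) ^ (2 / α) *
      ∑' n : ℕ, ((ascPochhammer ℝ n).eval (-(2 / α))) ^ 2 /
        ((ascPochhammer ℝ n).eval (1 - 2 / α) * (n.factorial : ℝ)) * (x / (1 + x)) ^ n ∧
    Pcov α x =
      (∑' n : ℕ, ((ascPochhammer ℝ n).eval (-(2 / α))) ^ 2 /
        ((ascPochhammer ℝ n).eval (1 - 2 / α) * (n.factorial : ℝ)) * (x / (1 + x)) ^ n)⁻¹ *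
      (1 + x) ^ (-(2 / α)) := by
  have hα0 : (0:ℝ) < α := by linarith
  set d : ℝ := 2 / α with hd
  have hd0 : 0 < d := by positivity
  have hd1 : d < 1 := by rw [hd, div_lt_one hα0]; linarith
  have h1x : (0:ℝ) < 1 + x := by linarith
  set z : ℝ := x / (1 + x) with hz
  have hz0 : 0 ≤ z := by positivity
  have hz1 : z < 1 := by rw [hz, div_lt_one h1x]; linarith
  have h1z : (0:ℝ) < 1 - z := by linarith
  have hzx : 1 - z = (1 + x)⁻¹ := by rw [hz]; field_simp; ring
  have hc0 : 0 < 1 - d := by linarith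
  set T : ℕ → ℝ := fun n => ((ascPochhammer ℝ n).eval (-d)) ^ 2 /
      ((ascPochhammer ℝ n).eval (1 - d) * (n.factorial : ℝ)) * z ^ n with hT
  obtain ⟨hcsum, hKeq⟩ := K_swap hd0 hd1 hz0 hz1
  set K : ℝ := ∫ t in Set.Ioo (0:ℝ) 1, t ^ (-d) * (1 - t * z) ^ (d - 1) with hK
  set L : ℝ := ∫ s in Set.Ioo (0:ℝ) 1, s ^ (-d) / (1 - z + z * s) with hL
  set B : ℝ := (1 - z) ^ (d - 1) with hB
  have hBsum : HasSum (fun m : ℕ => pb (1 - d) m * z ^ m) B := by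
    have h := pb_hasSum hc0 (by linarith) hz0 hz1
    rwa [show -(1 - d) = d - 1 by ring] at h
  have hHc : HasSum (fun m : ℕ =>
      d * z * (pb (1 - d) m * z ^ m / ((m : ℝ) + 1 - d))) (d * z * K) := by
    have h := hcsum.hasSum.mul_left (d * z)
    rwa [← hKeq] at h
  have hB1 : HasSum (fun m : ℕ => pb (1 - d) (m + 1) * z ^ (m + 1)) (B - 1) := by
    refine (hasSum_nat_add_iff (f := fun m : ℕ => pb (1 - d) m * z ^ m) 1).mpr ?_
    have hval : B - 1 + ∑ i ∈ Finset.range 1, pb (1 - d) i * z ^ i = B := by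
      simp [pb_zero]
    rw [hval]
    exact hBsum
  have hB2 : HasSum (fun m : ℕ => z * (pb (1 - d) m * z ^ m)) (z * B) := hBsum.mul_left z
  have hsum3 := (hB1.sub hB2).add hHc
  have hterm : ∀ m : ℕ,
      pb (1 - d) (m + 1) * z ^ (m + 1) - z * (pb (1 - d) m * z ^ m)
        + d * z * (pb (1 - d) m * z ^ m / ((m : ℝ) + 1 - d)) = T (m + 1) := by
    intro m
    have hP : (ascPochhammer ℝ (m + 1)).eval (-d)
        = -d * (ascPochhammer ℝ m).eval (1 - d) := by
      rw [ascPochhammer_succ_left, Polynomial.eval_mul, Polynomial.eval_X, Polynomial.eval_comp,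
        Polynomial.eval_add, Polynomial.eval_X, Polynomial.eval_one]
      rw [show (-d + 1 : ℝ) = 1 - d by ring]
    have hQ : (ascPochhammer ℝ (m + 1)).eval (1 - d)
        = (ascPochhammer ℝ m).eval (1 - d) * (1 - d + m) := ascPochhammer_succ_eval m (1 - d)
    have hPm : 0 < (ascPochhammer ℝ m).eval (1 - d) := ascPochhammer_pos m (1 - d) hc0
    have hPmne : (ascPochhammer ℝ m).eval (1 - d) ≠ 0 := ne_of_gt hPm
    have hfact : (m.factorial : ℝ) ≠ 0 := by exact_mod_cast Nat.factorial_ne_zero m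
    have hm1 : ((m : ℝ) + 1) ≠ 0 := by positivity
    have hmd : ((m : ℝ) + 1 - d) ≠ 0 := by
      have : (0:ℝ) ≤ m := Nat.cast_nonneg m
      intro h; nlinarith
    have hmd' : ((1 : ℝ) - d + m) ≠ 0 := by
      intro h; apply hmd; linarith
    have hfs : (((m + 1).factorial : ℝ)) = ((m : ℝ) + 1) * (m.factorial : ℝ) := by
      rw [Nat.factorial_succ]; push_cast; ring
    rw [hT]
    simp only []
    rw [hP, hQ, hfs, pb_succ, pb, pow_succ]
    field_simp
    ring
  rw [funext hterm] at hsum3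
  have hsumT : HasSum T (B - 1 - z * B + d * z * K + ∑ i ∈ Finset.range 1, T i) :=
    (hasSum_nat_add_iff (f := T) 1).mp hsum3
  have hT0 : T 0 = 1 := by
    rw [hT]
    simp
  have hval2 : B - 1 - z * B + d * z * K + ∑ i ∈ Finset.range 1, T i
      = (1 - z) * B + d * z * K := by
    rw [Finset.sum_range_one, hT0]
    ring
  rw [hval2] at hsumT
  -- integral side
  have hJ1 := J_subst hα hx
  rw [← hd] at hJ1
  have hJ2 : (∫ t in Set.Ioo (0:ℝ) 1, d * x * t ^ (-d) / (1 + x * t)) = d * z * L := by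
    rw [hL, ← MeasureTheory.integral_const_mul]
    apply setIntegral_congr_fun measurableSet_Ioo
    intro t ht
    obtain ⟨ht0, ht1⟩ := ht
    have htx : 0 < 1 + x * t := by nlinarith
    show d * x * t ^ (-d) / (1 + x * t) = d * z * (t ^ (-d) / (1 - z + z * t))
    have hden : 1 - z + z * t = (1 + x * t) / (1 + x) := by
      rw [hz]; field_simp; ring
    rw [hden, hz]
    field_simp
  have hKL : K = (1 - z) ^ d * L := moebius_subst hd0 hd1 hz0 hz1
  have hcov_eq : hcov α x = 1 + d * z * L := by
    rw [hcov]  -- def unfold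
    rw [hJ1, hJ2]
  have hBz : (1 - z) * B = (1 - z) ^ d := by
    rw [hB]
    have h := Real.rpow_add h1z 1 (d - 1)
    rw [Real.rpow_one, show (1 + (d - 1) : ℝ) = d by ring] at h
    exact h.symm
  have htsum : (∑' n : ℕ, T n) = (1 - z) ^ d * hcov α x := by
    rw [hsumT.tsum_eq, hcov_eq, hKL, hBz]
    ring
  have hone : (1 + x) ^ d * (1 - z) ^ d = 1 := by
    rw [hzx, ← Real.mul_rpow (by positivity) (by positivity),
      mul_inv_cancel₀ (ne_of_gt h1x), Real.one_rpow]
  have hg2 : hcov α x = (1 + x) ^ d * ∑' n : ℕ, T n := by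
    rw [htsum, ← mul_assoc, hone, one_mul]
  refine ⟨hsumT.summable, hg2, ?_⟩
  show (hcov α x)⁻¹ = (∑' n : ℕ, T n)⁻¹ * (1 + x) ^ (-d)
  rw [hg2, mul_inv, ← Real.rpow_neg h1x.le]
  ring
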